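/- Let F be a finite field, A, B ⊆ F finite subsets with |B| ≤ |A|, k ≥ 1 an integer, f, g ∈ F[X] of degree < k, and set V = f + χ_A, W = g + χ_B. Then χ_{B∖A}·V − χ_{A∖B}·W = χ_{B∖A}·f − χ_{A∖B}·g; in particular this polynomial has degree strictly less than deg χ_{A∖B} + k = |A∖B| + k. (This provides the existence of a combination witness of the kind found in the partial recovery attack.) -/

import Mathlib

open Polynomial Finset

/-- The characteristic polynomial of a finite subset `A` of a field:
`χ_A(X) = ∏_{a ∈ A} (X - a)`. -/
noncomputable def charPoly {F : Type*} [Field F] (A : Finset F) : F[X] :=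
  ∏ a ∈ A, (X - C a)

lemma charPoly_sdiff_mul {F : Type*} [Field F] [DecidableEq F] (A B : Finset F) :
    charPoly (B \ A) * charPoly A = charPoly (A ∪ B) := by
  rw [charPoly, charPoly, charPoly, ← Finset.prod_union (Finset.sdiff_disjoint),
    Finset.union_comm, Finset.union_sdiff_self_eq_union]

lemma charPoly_degree {F : Type*} [Field F] (A : Finset F) :
    (charPoly A).degree = (A.card : WithBot ℕ) := by
  rw [charPoly, degree_prod]
  simp only [degree_X_sub_C, Finset.sum_const, nsmul_eq_mul, mul_one]

/-- Existence of a combination witness: for vault records `V = f + χ_A` and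
`W = g + χ_B` with `|B| ≤ |A|`, one has
`χ_{B∖A}·V − χ_{A∖B}·W = χ_{B∖A}·f − χ_{A∖B}·g`, a polynomial of degree
strictly less than `|A∖B| + k`. -/
theorem stmt1 {F : Type*} [Field F] [Fintype F] [DecidableEq F]
    (k : ℕ) (hk : 1 ≤ k)
    (A B : Finset F) (hBA : B.card ≤ A.card)
    (f g : F[X]) (hf : f.degree < (k : WithBot ℕ)) (hg : g.degree < (k : WithBot ℕ))
    (V W : F[X]) (hV : V = f + charPoly A) (hW : W = g + charPoly B) :
    charPoly (B \ A) * V - charPoly (A \ B) * W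
        = charPoly (B \ A) * f - charPoly (A \ B) * g ∧
    (charPoly (B \ A) * f - charPoly (A \ B) * g).degree
        < (((A \ B).card + k : ℕ) : WithBot ℕ) := by
  have hcard : (B \ A).card ≤ (A \ B).card := by
    have h1 := Finset.card_sdiff_add_card_inter B A
    have h2 := Finset.card_sdiff_add_card_inter A B
    rw [Finset.inter_comm] at h1
    omega
  constructor
  · rw [hV, hW, mul_add, mul_add, charPoly_sdiff_mul A B, charPoly_sdiff_mul B A,
      Finset.union_comm]
    ring
  · have hd1 : (charPoly (B \ A) * f).degree < (((A \ B).card + k : ℕ) : WithBot ℕ) := by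
      rw [degree_mul, charPoly_degree]
      calc ((B \ A).card : WithBot ℕ) + f.degree
          < ((B \ A).card : WithBot ℕ) + k := by
            exact WithBot.add_lt_add_left (by simp) hf
        _ ≤ (((A \ B).card + k : ℕ) : WithBot ℕ) := by
            push_cast
            exact add_le_add (by exact_mod_cast hcard) le_rfl
    have hd2 : (charPoly (A \ B) * g).degree < (((A \ B).card + k : ℕ) : WithBot ℕ) := by
      rw [degree_mul, charPoly_degree]
      calc ((A \ B).card : WithBot ℕ) + g.degree
          < ((A \ B).card : WithBot ℕ) + k := WithBot.add_lt_add_left (by simp) hg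
        _ = (((A \ B).card + k : ℕ) : WithBot ℕ) := by push_cast; ring
    exact lt_of_le_of_lt (degree_sub_le _ _) (max_lt hd1 hd2)
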